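/- Let X be Poisson-distributed with mean λ, and let λ' > 0. Then Var[((X - λ')² - X)/λ'] = (2λ² + 4λ(λ - λ')²)/λ'². -/
import Mathlib


open Finset

/-- For `X ~ Poisson(λ)` and `λ' > 0`,
`Var[((X - λ')² - X)/λ'] = (2λ² + 4λ(λ - λ')²)/λ'²`.
The variance is written explicitly against the Poisson pmf `k ↦ exp(-λ)·λ^k/k!`,
as the expected squared deviation from the mean `(λ - λ')²/λ'`. -/
lemma hasSum_poisson_descFactorial (lam : ℝ) (j : ℕ) :
    HasSum (fun k : ℕ => lam ^ k / (Nat.factorial k) * (Nat.descFactorial k j : ℝ))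
      (lam ^ j * Real.exp lam) := by
  have hexp : HasSum (fun k : ℕ => lam ^ k / (Nat.factorial k)) (Real.exp lam) := by
    have h := (Real.summable_pow_div_factorial lam).hasSum
    rwa [show (∑' n : ℕ, lam ^ n / (Nat.factorial n)) = Real.exp lam by
      rw [Real.exp_eq_exp_ℝ, NormedSpace.exp_eq_tsum_div]] at h
  have hinj : Function.Injective (fun k : ℕ => k + j) := fun x y h => by simpa using h
  have h0 : ∀ x ∉ Set.range (fun k : ℕ => k + j),
      lam ^ x / (Nat.factorial x) * (Nat.descFactorial x j : ℝ) = 0 := by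
    intro x hx
    have hxj : x < j := by
      by_contra h
      push_neg at h
      exact hx ⟨x - j, by simp; omega⟩
    rw [Nat.descFactorial_eq_zero_iff_lt.mpr hxj]; simp
  refine (Function.Injective.hasSum_iff hinj h0).mp ?_
  refine (hexp.mul_left (lam ^ j)).congr_fun fun k => ?_
  show lam ^ (k + j) / (Nat.factorial (k + j)) * (Nat.descFactorial (k + j) j : ℝ) =
    lam ^ j * (lam ^ k / (Nat.factorial k))
  have key : (Nat.factorial k : ℝ) * (Nat.descFactorial (k + j) j : ℝ)
      = (Nat.factorial (k + j) : ℝ) := by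
    exact_mod_cast congrArg (Nat.cast (R := ℝ)) (by
      rw [Nat.add_descFactorial_eq_ascFactorial]
      exact Nat.factorial_mul_ascFactorial k j)
  have hk : (Nat.factorial k : ℝ) ≠ 0 := Nat.cast_ne_zero.mpr k.factorial_ne_zero
  have hkj : (Nat.factorial (k + j) : ℝ) ≠ 0 := Nat.cast_ne_zero.mpr (k + j).factorial_ne_zero
  field_simp
  rw [pow_add]
  linear_combination (lam ^ k * lam ^ j) * key

lemma df_cast2 (k : ℕ) : (Nat.descFactorial k 2 : ℝ) = (k : ℝ) * ((k : ℝ) - 1) := by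
  rcases k with _ | m
  · simp [Nat.descFactorial]
  · simp [Nat.descFactorial]; push_cast; ring

lemma df_cast3 (k : ℕ) : (Nat.descFactorial k 3 : ℝ) = (k : ℝ) * ((k : ℝ) - 1) * ((k : ℝ) - 2) := by
  rcases k with _ | _ | m
  · simp [Nat.descFactorial]
  · simp [Nat.descFactorial]
  · simp [Nat.descFactorial]; push_cast; ring

lemma df_cast4 (k : ℕ) :
    (Nat.descFactorial k 4 : ℝ) = (k : ℝ) * ((k : ℝ) - 1) * ((k : ℝ) - 2) * ((k : ℝ) - 3) := by
  rcases k with _ | _ | _ | m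
  · simp [Nat.descFactorial]
  · simp [Nat.descFactorial]
  · simp [Nat.descFactorial]
  · simp [Nat.descFactorial]; push_cast; ring

theorem poisson_chi_sq_term_variance (lam lam' : ℝ) (hlam : 0 < lam) (hlam' : 0 < lam') :
    ∑' k : ℕ, (Real.exp (-lam) * lam ^ k / (Nat.factorial k)) *
        (((((k : ℝ) - lam') ^ 2 - (k : ℝ)) / lam') - (lam - lam') ^ 2 / lam') ^ 2 =
      (2 * lam ^ 2 + 4 * lam * (lam - lam') ^ 2) / lam' ^ 2 := by
  set c0 : ℝ := 4 * lam ^ 2 * lam' ^ 2 - 4 * lam ^ 3 * lam' + lam ^ 4 with hc0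
  set c1 : ℝ := 4 * lam' ^ 2 - 8 * lam * lam' ^ 2 + 4 * lam ^ 2 * lam' with hc1
  set c2 : ℝ := 2 - 8 * lam' + 4 * lam' ^ 2 + 4 * lam * lam' - 2 * lam ^ 2 with hc2
  set c3 : ℝ := 4 - 4 * lam' with hc3
  have h0 := hasSum_poisson_descFactorial lam 0
  have h1 := hasSum_poisson_descFactorial lam 1
  have h2 := hasSum_poisson_descFactorial lam 2
  have h3 := hasSum_poisson_descFactorial lam 3
  have h4 := hasSum_poisson_descFactorial lam 4
  have H := (((((h0.mul_left c0).add (h1.mul_left c1)).add (h2.mul_left c2)).add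
      (h3.mul_left c3)).add h4).mul_left (Real.exp (-lam) / lam' ^ 2)
  have hb : lam' ≠ 0 := ne_of_gt hlam'
  have Hfun : (fun k : ℕ => Real.exp (-lam) / lam' ^ 2 *
      ((((c0 * (lam ^ k / (Nat.factorial k) * (Nat.descFactorial k 0 : ℝ)) +
          c1 * (lam ^ k / (Nat.factorial k) * (Nat.descFactorial k 1 : ℝ))) +
          c2 * (lam ^ k / (Nat.factorial k) * (Nat.descFactorial k 2 : ℝ))) +
          c3 * (lam ^ k / (Nat.factorial k) * (Nat.descFactorial k 3 : ℝ))) +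
          (lam ^ k / (Nat.factorial k) * (Nat.descFactorial k 4 : ℝ))))
      = fun k : ℕ => (Real.exp (-lam) * lam ^ k / (Nat.factorial k)) *
        (((((k : ℝ) - lam') ^ 2 - (k : ℝ)) / lam') - (lam - lam') ^ 2 / lam') ^ 2 := by
    funext k
    have hk : (Nat.factorial k : ℝ) ≠ 0 := Nat.cast_ne_zero.mpr k.factorial_ne_zero
    rw [df_cast2, df_cast3, df_cast4]
    simp only [Nat.descFactorial_zero, Nat.descFactorial_one, Nat.cast_one]
    field_simp
    ring
  rw [← Hfun, H.tsum_eq]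
  have he : Real.exp lam ≠ 0 := Real.exp_ne_zero lam
  rw [Real.exp_neg]
  field_simp
  ring
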